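/- Let (p,q) be a P_III Bäcklund lattice with data (t,a1,a2), and set H(k1,k2) = H_III(p(k1,k2), q(k1,k2); a1+k1, a2+k2). Then: (a) if a1+l ≠ 0 for all l ∈ ℤ, the function u(l,m) = −t·(H(l,m) − 1)/(a1+l) satisfies the HV equation; (b) if a2+l ≠ 0 for all l ∈ ℤ, the function u(l,m) = −t·H(m,l)/(a2+l) satisfies the HV equation. -/

import Mathlib

/-- The Hamiltonian of the third Painlevé equation. -/
noncomputable def HIII (t p q a1 a2 : ℂ) : ℂ :=
  (1 / t) * (p * (p - 1) * q ^ 2 + (a1 + a2) * p * q + t * p - a2 * q)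

section PIIIAux

set_option maxHeartbeats 4000000
set_option maxRecDepth 100000

private lemma Hstep2 (t a b po pn qn : ℂ) (ht : t ≠ 0) (hqn : qn ≠ 0)
    (h : pn = - t * po / qn ^ 2 - b / qn) :
    HIII t pn qn a b = (t ^ 2 * po ^ 2 + (-1) * t ^ 2 * po + (-1) * t * a * po * qn + t * b * po * qn + (-1) * t * b * qn + t * po * qn ^ 2 + (-1) * a * b * qn ^ 2) / (t * qn ^ 2) := by
  have hpn : pn * qn ^ 2 = - t * po - b * qn := by
    rw [h]; field_simp
  simp only [HIII]
  subst h
  field_simp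
  ring

private lemma Hstep4 (t a b po pn qn : ℂ) (ht : t ≠ 0) (hqn : qn ≠ 0)
    (h : pn = t * (po - 1) / qn ^ 2 - a / qn + 1) :
    HIII t pn qn a b = (t ^ 2 * po ^ 2 + (-1) * t ^ 2 * po + (-1) * t * a * po * qn + t * b * po * qn + (-1) * t * b * qn + t * po * qn ^ 2 + (-1) * a * b * qn ^ 2) / (t * qn ^ 2) := by
  have hpn : pn * qn ^ 2 = t * (po - 1) - a * qn + qn ^ 2 := by
    rw [h]; field_simp
  simp only [HIII]
  subst h
  field_simp
  ring

private lemma Hval00 (t A B P Q : ℂ) (ht : t ≠ 0) :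
    HIII t P Q A B = (t * P + A * P * Q + B * P * Q + (-1) * B * Q + P ^ 2 * Q ^ 2 + (-1) * P * Q ^ 2) / t := by
  simp only [HIII]
  rw [eq_div_iff ht]
  field_simp
  ring

private lemma HA01 (t A B B' P Q p2 q2 : ℂ) (ht : t ≠ 0) (hP : P ≠ 0)
    (hD2 : P * Q + B ≠ 0) (hq2n : q2 ≠ 0)
    (hB' : B' = B + 1)
    (hr3 : q2 * (P * Q + B) = - t * P)
    (hr4 : p2 = t * (P - 1) / q2 ^ 2 - A / q2 + 1) :
    HIII t p2 q2 A B' = (t * P ^ 2 + A * P ^ 2 * Q + (-1) * A * P + B * P ^ 2 * Q + (-1) * B * P * Q + (-1) * B * P + B + P ^ 3 * Q ^ 2 + (-1) * P ^ 2 * Q ^ 2 + (-1) * P ^ 2 * Q + P * Q) / (t * P) := by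
  subst hB'
  rw [Hstep4 t A (B + 1) P p2 q2 ht hq2n hr4]
  rw [div_eq_div_iff (mul_ne_zero ht (pow_ne_zero 2 hq2n)) (mul_ne_zero ht hP)]
  apply mul_left_cancel₀ (pow_ne_zero 2 hD2)
  linear_combination (t ^ 2 * B ^ 2 * P ^ 2 + (-1) * t ^ 2 * B ^ 2 * P + (2) * t ^ 2 * B * P ^ 3 * Q + (-2) * t ^ 2 * B * P ^ 2 * Q + t ^ 2 * P ^ 4 * Q ^ 2 + (-1) * t ^ 2 * P ^ 3 * Q ^ 2 + (-1) * t * A * B ^ 2 * P * q2 + (-2) * t * A * B * P ^ 2 * Q * q2 + (-1) * t * A * P ^ 3 * Q ^ 2 * q2 + (-1) * t * B ^ 2 * P ^ 2 * Q * q2 + t * B ^ 2 * P * Q * q2 + t * B ^ 2 * P * q2 + (-1) * t * B ^ 2 * q2 + (-2) * t * B * P ^ 3 * Q ^ 2 * q2 + (2) * t * B * P ^ 2 * Q ^ 2 * q2 + (2) * t * B * P ^ 2 * Q * q2 + (-2) * t * B * P * Q * q2 + (-1) * t * P ^ 4 * Q ^ 3 * q2 + t * P ^ 3 * Q ^ 3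 * q2 + t * P ^ 3 * Q ^ 2 * q2 + (-1) * t * P ^ 2 * Q ^ 2 * q2) * hr3

private lemma HA10 (t A B A' P Q p1 q1 : ℂ) (ht : t ≠ 0) (hPm1 : P - 1 ≠ 0)
    (hD1 : A + Q * (P - 1) ≠ 0) (hq1n : q1 ≠ 0)
    (hA' : A' = A + 1)
    (hr1 : q1 * (A + Q * (P - 1)) = t * (P - 1))
    (hr2 : p1 = - t * P / q1 ^ 2 - B / q1) :
    HIII t p1 q1 A' B = (t * P ^ 2 + (-1) * t * P + A * P ^ 2 * Q + (-1) * A * P * Q + (-1) * A * P + B * P ^ 2 * Q + (-2) * B * P * Q + (-1) * B * P + B * Q + B + P ^ 3 * Q ^ 2 + (-2) * P ^ 2 * Q ^ 2 + (-1) * P ^ 2 * Q + P * Q ^ 2 + P * Q) / (t * (P - 1)) := by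
  subst hA'
  rw [Hstep2 t (A + 1) B P p1 q1 ht hq1n hr2]
  rw [div_eq_div_iff (mul_ne_zero ht (pow_ne_zero 2 hq1n)) (mul_ne_zero ht hPm1)]
  apply mul_left_cancel₀ (pow_ne_zero 2 hD1)
  linear_combination ((-1) * t ^ 2 * A ^ 2 * P ^ 2 + t ^ 2 * A ^ 2 * P + (-2) * t ^ 2 * A * P ^ 3 * Q + (4) * t ^ 2 * A * P ^ 2 * Q + (-2) * t ^ 2 * A * P * Q + (-1) * t ^ 2 * P ^ 4 * Q ^ 2 + (3) * t ^ 2 * P ^ 3 * Q ^ 2 + (-3) * t ^ 2 * P ^ 2 * Q ^ 2 + t ^ 2 * P * Q ^ 2 + (-1) * t * A ^ 2 * B * P * q1 + t * A ^ 2 * B * q1 + (-1) * t * A ^ 2 * P ^ 2 * Q * q1 + t * A ^ 2 * P * Q * q1 + t * A ^ 2 * P * q1 + (-2) * t * A * B * P ^ 2 * Q * q1 + (4) * t * A * B * P * Q * q1 + (-2) * t * A * B * Q * q1 + (-2) * t * A * P ^ 3 * Q ^ 2 * q1 + (4) * t * A * P ^ 2 * Q ^ 2 * q1 + (2) * t *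 A * P ^ 2 * Q * q1 + (-2) * t * A * P * Q ^ 2 * q1 + (-2) * t * A * P * Q * q1 + (-1) * t * B * P ^ 3 * Q ^ 2 * q1 + (3) * t * B * P ^ 2 * Q ^ 2 * q1 + (-3) * t * B * P * Q ^ 2 * q1 + t * B * Q ^ 2 * q1 + (-1) * t * P ^ 4 * Q ^ 3 * q1 + (3) * t * P ^ 3 * Q ^ 3 * q1 + t * P ^ 3 * Q ^ 2 * q1 + (-3) * t * P ^ 2 * Q ^ 3 * q1 + (-2) * t * P ^ 2 * Q ^ 2 * q1 + t * P * Q ^ 3 * q1 + t * P * Q ^ 2 * q1) * hr1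

private lemma HA11 (t A B A' B' P Q p2 p12 q12 : ℂ) (ht : t ≠ 0) (hP : P ≠ 0)
    (hPm1 : P - 1 ≠ 0) (hE : ((P - 1) * (P * Q + B) + A * P) ≠ 0) (hq12n : q12 ≠ 0)
    (hA' : A' = A + 1) (hB' : B' = B + 1)
    (hc2p : p2 * (t * P ^ 2) = t * P ^ 2 + (P * Q + B) * ((P - 1) * (P * Q + B) + A * P))
    (hc12q : q12 * (P * (P - 1)) = -((P - 1) * (P * Q + B) + A * P))
    (hr6 : p12 = - t * p2 / q12 ^ 2 - B' / q12) :
    HIII t p12 q12 A' B' = (t * A * P ^ 2 + t * B * P ^ 2 + (-1) * t * B * P + t * P ^ 3 * Q + (-1) * t * P ^ 2 * Q + t * P ^ 2 + (-1) * t * P + A ^ 2 * P ^ 2 * Q + (-1) * A ^ 2 * P + (2) * A * B * P ^ 2 * Q + (-2) * A * B * P * Q + (-2) * A * B * P + A * B + (2) * A * P ^ 3 * Q ^ 2 + (-2) * A * P ^ 2 * Q ^ 2 + (-1) * A * P ^ 2 * Q + A * P * Q + (-1) * A * P + B ^ 2 * P ^ 2 * Q + (-2) * B ^ 2 * P * Q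 + (-1) * B ^ 2 * P + B ^ 2 * Q + B ^ 2 + (2) * B * P ^ 3 * Q ^ 2 + (-4) * B * P ^ 2 * Q ^ 2 + (-1) * B * P ^ 2 * Q + (2) * B * P * Q ^ 2 + B * P * Q + (-1) * B * P + B + P ^ 4 * Q ^ 3 + (-2) * P ^ 3 * Q ^ 3 + P ^ 2 * Q ^ 3 + (-1) * P ^ 2 * Q + P * Q) / (t * ((P - 1) * (P * Q + B) + A * P)) := by
  subst hA' hB'
  rw [Hstep2 t (A + 1) (B + 1) p2 p12 q12 ht hq12n hr6]
  have hv1 : (t ^ 2 * p2 ^ 2 + (-1) * t ^ 2 * p2 + (-1) * t * A * p2 * q12 + t * B * p2 * q12 + (-1) * t * B * q12 + t * p2 * q12 ^ 2 + (-1) * t * q12 + (-1) * A * B * q12 ^ 2 + (-1) * A * q12 ^ 2 + (-1) * B * q12 ^ 2 + (-1) * q12 ^ 2) * (t * P ^ 2) ^ 2 = t ^ 3 * A * B * P ^ 3 + t ^ 3 * A * P ^ 4 * Q + (-1) * t ^ 3 * A * P ^ 4 * q12 + t ^ 3 * B ^ 2 * P ^ 3 + (-1) * t ^ 3 * B ^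 2 * P ^ 2 + (2) * t ^ 3 * B * P ^ 4 * Q + (-2) * t ^ 3 * B * P ^ 3 * Q + t ^ 3 * P ^ 5 * Q ^ 2 + (-1) * t ^ 3 * P ^ 4 * Q ^ 2 + t ^ 3 * P ^ 4 * q12 ^ 2 + (-1) * t ^ 3 * P ^ 4 * q12 + t ^ 2 * A ^ 2 * B ^ 2 * P ^ 2 + (2) * t ^ 2 * A ^ 2 * B * P ^ 3 * Q + (-1) * t ^ 2 * A ^ 2 * B * P ^ 3 * q12 + t ^ 2 * A ^ 2 * P ^ 4 * Q ^ 2 + (-1) * t ^ 2 * A ^ 2 * P ^ 4 * Q * q12 + (2) * t ^ 2 * A * B ^ 3 * P ^ 2 + (-2) * t ^ 2 * A * B ^ 3 * P + (6) * t ^ 2 * A * B ^ 2 * P ^ 3 * Q + (-6) * t ^ 2 * A * B ^ 2 * P ^ 2 * Q + t ^ 2 * A * B ^ 2 * P ^ 2 * q12 + (6) * t ^ 2 * A * B * P ^ 4 * Q ^ 2 + (-1) * t ^ 2 * A * B * P ^ 4 * Q * q12 + (-1) * t ^ 2 * A * B * P ^ 4 * q12 ^ 2 + (-6) * t ^ 2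 * A * B * P ^ 3 * Q ^ 2 + (2) * t ^ 2 * A * B * P ^ 3 * Q * q12 + t ^ 2 * A * B * P ^ 3 * q12 ^ 2 + (2) * t ^ 2 * A * P ^ 5 * Q ^ 3 + (-1) * t ^ 2 * A * P ^ 5 * Q ^ 2 * q12 + (-2) * t ^ 2 * A * P ^ 4 * Q ^ 3 + t ^ 2 * A * P ^ 4 * Q ^ 2 * q12 + t ^ 2 * A * P ^ 4 * Q * q12 ^ 2 + (-1) * t ^ 2 * A * P ^ 4 * q12 ^ 2 + t ^ 2 * B ^ 4 * P ^ 2 + (-2) * t ^ 2 * B ^ 4 * P + t ^ 2 * B ^ 4 + (4) * t ^ 2 * B ^ 3 * P ^ 3 * Q + t ^ 2 * B ^ 3 * P ^ 3 * q12 + (-8) * t ^ 2 * B ^ 3 * P ^ 2 * Q + (-1) * t ^ 2 * B ^ 3 * P ^ 2 * q12 + (4) * t ^ 2 * B ^ 3 * P * Q + (6) * t ^ 2 * B ^ 2 * P ^ 4 * Q ^ 2 + (2) * t ^ 2 * B ^ 2 * P ^ 4 * Q * q12 + (-12) * t ^ 2 * B ^ 2 * P ^ 3 * Q ^ 2 +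 (-2) * t ^ 2 * B ^ 2 * P ^ 3 * Q * q12 + t ^ 2 * B ^ 2 * P ^ 3 * q12 ^ 2 + (6) * t ^ 2 * B ^ 2 * P ^ 2 * Q ^ 2 + (-1) * t ^ 2 * B ^ 2 * P ^ 2 * q12 ^ 2 + (4) * t ^ 2 * B * P ^ 5 * Q ^ 3 + t ^ 2 * B * P ^ 5 * Q ^ 2 * q12 + (-8) * t ^ 2 * B * P ^ 4 * Q ^ 3 + (-1) * t ^ 2 * B * P ^ 4 * Q ^ 2 * q12 + (2) * t ^ 2 * B * P ^ 4 * Q * q12 ^ 2 + (-1) * t ^ 2 * B * P ^ 4 * q12 ^ 2 + (4) * t ^ 2 * B * P ^ 3 * Q ^ 3 + (-2) * t ^ 2 * B * P ^ 3 * Q * q12 ^ 2 + t ^ 2 * P ^ 6 * Q ^ 4 + (-2) * t ^ 2 * P ^ 5 * Q ^ 4 + t ^ 2 * P ^ 5 * Q ^ 2 * q12 ^ 2 + t ^ 2 * P ^ 4 * Q ^ 4 + (-1) * t ^ 2 * P ^ 4 * Q ^ 2 * q12 ^ 2 + (-1) * t ^ 2 * P ^ 4 * q12 ^ 2 := by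
    linear_combination (norm := ring1) (t ^ 3 * P ^ 2 * p2 + t ^ 2 * A * B * P + t ^ 2 * A * P ^ 2 * Q + (-1) * t ^ 2 * A * P ^ 2 * q12 + t ^ 2 * B ^ 2 * P + (-1) * t ^ 2 * B ^ 2 + (2) * t ^ 2 * B * P ^ 2 * Q + t ^ 2 * B * P ^ 2 * q12 + (-2) * t ^ 2 * B * P * Q + t ^ 2 * P ^ 3 * Q ^ 2 + (-1) * t ^ 2 * P ^ 2 * Q ^ 2 + t ^ 2 * P ^ 2 * q12 ^ 2) * hc2p
  have hv2 : (t ^ 3 * A * B * P ^ 3 + t ^ 3 * A * P ^ 4 * Q + (-1) * t ^ 3 * A * P ^ 4 * q12 + t ^ 3 * B ^ 2 * P ^ 3 + (-1) * t ^ 3 * B ^ 2 * P ^ 2 + (2) * t ^ 3 * B * P ^ 4 * Q + (-2) * t ^ 3 * B * P ^ 3 * Q + t ^ 3 * P ^ 5 * Q ^ 2 + (-1) * t ^ 3 * P ^ 4 * Q ^ 2 + t ^ 3 * P ^ 4 * q12 ^ 2 + (-1) * t ^ 3 * P ^ 4 * q12 + t ^ 2 * A ^ 2 * B ^ 2 *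 P ^ 2 + (2) * t ^ 2 * A ^ 2 * B * P ^ 3 * Q + (-1) * t ^ 2 * A ^ 2 * B * P ^ 3 * q12 + t ^ 2 * A ^ 2 * P ^ 4 * Q ^ 2 + (-1) * t ^ 2 * A ^ 2 * P ^ 4 * Q * q12 + (2) * t ^ 2 * A * B ^ 3 * P ^ 2 + (-2) * t ^ 2 * A * B ^ 3 * P + (6) * t ^ 2 * A * B ^ 2 * P ^ 3 * Q + (-6) * t ^ 2 * A * B ^ 2 * P ^ 2 * Q + t ^ 2 * A * B ^ 2 * P ^ 2 * q12 + (6) * t ^ 2 * A * B * P ^ 4 * Q ^ 2 + (-1) * t ^ 2 * A * B * P ^ 4 * Q * q12 + (-1) * t ^ 2 * A * B * P ^ 4 * q12 ^ 2 + (-6) * t ^ 2 * A * B * P ^ 3 * Q ^ 2 + (2) * t ^ 2 * A * B * P ^ 3 * Q * q12 + t ^ 2 * A * B * P ^ 3 * q12 ^ 2 + (2) * t ^ 2 * A * P ^ 5 * Q ^ 3 + (-1) * t ^ 2 * A * P ^ 5 * Q ^ 2 * q12 + (-2) * t ^ 2 * A * P ^ 4 * Q ^ 3 + t ^ 2 *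 A * P ^ 4 * Q ^ 2 * q12 + t ^ 2 * A * P ^ 4 * Q * q12 ^ 2 + (-1) * t ^ 2 * A * P ^ 4 * q12 ^ 2 + t ^ 2 * B ^ 4 * P ^ 2 + (-2) * t ^ 2 * B ^ 4 * P + t ^ 2 * B ^ 4 + (4) * t ^ 2 * B ^ 3 * P ^ 3 * Q + t ^ 2 * B ^ 3 * P ^ 3 * q12 + (-8) * t ^ 2 * B ^ 3 * P ^ 2 * Q + (-1) * t ^ 2 * B ^ 3 * P ^ 2 * q12 + (4) * t ^ 2 * B ^ 3 * P * Q + (6) * t ^ 2 * B ^ 2 * P ^ 4 * Q ^ 2 + (2) * t ^ 2 * B ^ 2 * P ^ 4 * Q * q12 + (-12) * t ^ 2 * B ^ 2 * P ^ 3 * Q ^ 2 + (-2) * t ^ 2 * B ^ 2 * P ^ 3 * Q * q12 + t ^ 2 * B ^ 2 * P ^ 3 * q12 ^ 2 + (6) * t ^ 2 * B ^ 2 * P ^ 2 * Q ^ 2 + (-1) * t ^ 2 * B ^ 2 * P ^ 2 * q12 ^ 2 + (4) * t ^ 2 * B * P ^ 5 * Q ^ 3 + t ^ 2 * B * P ^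 5 * Q ^ 2 * q12 + (-8) * t ^ 2 * B * P ^ 4 * Q ^ 3 + (-1) * t ^ 2 * B * P ^ 4 * Q ^ 2 * q12 + (2) * t ^ 2 * B * P ^ 4 * Q * q12 ^ 2 + (-1) * t ^ 2 * B * P ^ 4 * q12 ^ 2 + (4) * t ^ 2 * B * P ^ 3 * Q ^ 3 + (-2) * t ^ 2 * B * P ^ 3 * Q * q12 ^ 2 + t ^ 2 * P ^ 6 * Q ^ 4 + (-2) * t ^ 2 * P ^ 5 * Q ^ 4 + t ^ 2 * P ^ 5 * Q ^ 2 * q12 ^ 2 + t ^ 2 * P ^ 4 * Q ^ 4 + (-1) * t ^ 2 * P ^ 4 * Q ^ 2 * q12 ^ 2 + (-1) * t ^ 2 * P ^ 4 * q12 ^ 2) * (P * (P - 1)) ^ 2 = t ^ 3 * A ^ 2 * P ^ 7 + (2) * t ^ 3 * A * B * P ^ 7 + (-2) * t ^ 3 * A * B * P ^ 6 + (2) * t ^ 3 * A * P ^ 8 * Q + (-2) * t ^ 3 * A * P ^ 7 * Q + t ^ 3 * A * P ^ 7 + (-1) * t ^ 3 * A * P ^ 6 + t ^ 3 * B ^ 2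 * P ^ 7 + (-2) * t ^ 3 * B ^ 2 * P ^ 6 + t ^ 3 * B ^ 2 * P ^ 5 + (2) * t ^ 3 * B * P ^ 8 * Q + (-4) * t ^ 3 * B * P ^ 7 * Q + t ^ 3 * B * P ^ 7 + (2) * t ^ 3 * B * P ^ 6 * Q + (-2) * t ^ 3 * B * P ^ 6 + t ^ 3 * B * P ^ 5 + t ^ 3 * P ^ 9 * Q ^ 2 + (-2) * t ^ 3 * P ^ 8 * Q ^ 2 + t ^ 3 * P ^ 8 * Q + t ^ 3 * P ^ 7 * Q ^ 2 + (-2) * t ^ 3 * P ^ 7 * Q + t ^ 3 * P ^ 6 * Q + t ^ 2 * A ^ 3 * P ^ 7 * Q + (-1) * t ^ 2 * A ^ 3 * P ^ 6 + (3) * t ^ 2 * A ^ 2 * B * P ^ 7 * Q + (-3) * t ^ 2 * A ^ 2 * B * P ^ 6 * Q + (-3) * t ^ 2 * A ^ 2 * B * P ^ 6 + (2) * t ^ 2 * A ^ 2 * B * P ^ 5 + (3) * t ^ 2 * A ^ 2 * P ^ 8 * Q ^ 2 + (-3) * t ^ 2 * A ^ 2 * P ^ 7 * Q ^ 2 + (-2)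 * t ^ 2 * A ^ 2 * P ^ 7 * Q + (2) * t ^ 2 * A ^ 2 * P ^ 6 * Q + (-1) * t ^ 2 * A ^ 2 * P ^ 6 + (3) * t ^ 2 * A * B ^ 2 * P ^ 7 * Q + (-6) * t ^ 2 * A * B ^ 2 * P ^ 6 * Q + (-3) * t ^ 2 * A * B ^ 2 * P ^ 6 + (3) * t ^ 2 * A * B ^ 2 * P ^ 5 * Q + (4) * t ^ 2 * A * B ^ 2 * P ^ 5 + (-1) * t ^ 2 * A * B ^ 2 * P ^ 4 + (6) * t ^ 2 * A * B * P ^ 8 * Q ^ 2 + (-12) * t ^ 2 * A * B * P ^ 7 * Q ^ 2 + (-4) * t ^ 2 * A * B * P ^ 7 * Q + (6) * t ^ 2 * A * B * P ^ 6 * Q ^ 2 + (6) * t ^ 2 * A * B * P ^ 6 * Q + (-2) * t ^ 2 * A * B * P ^ 6 + (-2) * t ^ 2 * A * B * P ^ 5 * Q + (2) * t ^ 2 * A * B * P ^ 5 + (3) * t ^ 2 * A * P ^ 9 * Q ^ 3 + (-6) * t ^ 2 * A * P ^ 8 * Q ^ 3 + (-1) * t ^ 2 * A * P ^ 8 * Q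 ^ 2 + (3) * t ^ 2 * A * P ^ 7 * Q ^ 3 + (2) * t ^ 2 * A * P ^ 7 * Q ^ 2 + (-2) * t ^ 2 * A * P ^ 7 * Q + (-1) * t ^ 2 * A * P ^ 6 * Q ^ 2 + (2) * t ^ 2 * A * P ^ 6 * Q + t ^ 2 * B ^ 3 * P ^ 7 * Q + (-3) * t ^ 2 * B ^ 3 * P ^ 6 * Q + (-1) * t ^ 2 * B ^ 3 * P ^ 6 + (3) * t ^ 2 * B ^ 3 * P ^ 5 * Q + (2) * t ^ 2 * B ^ 3 * P ^ 5 + (-1) * t ^ 2 * B ^ 3 * P ^ 4 * Q + (-1) * t ^ 2 * B ^ 3 * P ^ 4 + (3) * t ^ 2 * B ^ 2 * P ^ 8 * Q ^ 2 + (-9) * t ^ 2 * B ^ 2 * P ^ 7 * Q ^ 2 + (-2) * t ^ 2 * B ^ 2 * P ^ 7 * Q + (9) * t ^ 2 * B ^ 2 * P ^ 6 * Q ^ 2 + (4) * t ^ 2 * B ^ 2 * P ^ 6 * Q + (-1) * t ^ 2 * B ^ 2 * P ^ 6 + (-3) * t ^ 2 * B ^ 2 * P ^ 5 * Q ^ 2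 + (-2) * t ^ 2 * B ^ 2 * P ^ 5 * Q + (2) * t ^ 2 * B ^ 2 * P ^ 5 + (-1) * t ^ 2 * B ^ 2 * P ^ 4 + (3) * t ^ 2 * B * P ^ 9 * Q ^ 3 + (-9) * t ^ 2 * B * P ^ 8 * Q ^ 3 + (-1) * t ^ 2 * B * P ^ 8 * Q ^ 2 + (9) * t ^ 2 * B * P ^ 7 * Q ^ 3 + (2) * t ^ 2 * B * P ^ 7 * Q ^ 2 + (-2) * t ^ 2 * B * P ^ 7 * Q + (-3) * t ^ 2 * B * P ^ 6 * Q ^ 3 + (-1) * t ^ 2 * B * P ^ 6 * Q ^ 2 + (4) * t ^ 2 * B * P ^ 6 * Q + (-2) * t ^ 2 * B * P ^ 5 * Q + t ^ 2 * P ^ 10 * Q ^ 4 + (-3) * t ^ 2 * P ^ 9 * Q ^ 4 + (3) * t ^ 2 * P ^ 8 * Q ^ 4 + (-1) * t ^ 2 * P ^ 8 * Q ^ 2 + (-1) * t ^ 2 * P ^ 7 * Q ^ 4 + (2) * t ^ 2 * P ^ 7 * Q ^ 2 + (-1) * t ^ 2 * P ^ 6 * Q ^ 2 := by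
    linear_combination (norm := ring1) ((-1) * t ^ 3 * A * P ^ 6 + (-1) * t ^ 3 * B * P ^ 5 + t ^ 3 * B * P ^ 4 + (-1) * t ^ 3 * P ^ 6 * Q + t ^ 3 * P ^ 6 * q12 + (-1) * t ^ 3 * P ^ 6 + t ^ 3 * P ^ 5 * Q + (-1) * t ^ 3 * P ^ 5 * q12 + t ^ 3 * P ^ 5 + (-1) * t ^ 2 * A ^ 2 * P ^ 6 * Q + t ^ 2 * A ^ 2 * P ^ 5 + t ^ 2 * A * B ^ 2 * P ^ 5 + (-2) * t ^ 2 * A * B ^ 2 * P ^ 4 + t ^ 2 * A * B ^ 2 * P ^ 3 + (-1) * t ^ 2 * A * B * P ^ 6 * q12 + (-2) * t ^ 2 * A * B * P ^ 5 * Q + (2) * t ^ 2 * A * B * P ^ 5 * q12 + (2) * t ^ 2 * A * B * P ^ 5 + (2) * t ^ 2 * A * B * P ^ 4 * Q + (-1) * t ^ 2 * A * B * P ^ 4 * q12 + (-1) * t ^ 2 * A * B * P ^ 4 + (-1) * t ^ 2 * A * P ^ 7 * Q ^ 2 + t ^ 2 * A * P ^ 6 * Q * q12 + t ^ 2 * A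 * P ^ 6 * Q + (-1) * t ^ 2 * A * P ^ 6 * q12 + t ^ 2 * A * P ^ 5 * Q ^ 2 + (-1) * t ^ 2 * A * P ^ 5 * Q * q12 + (-1) * t ^ 2 * A * P ^ 5 * Q + t ^ 2 * A * P ^ 5 * q12 + t ^ 2 * A * P ^ 5 + t ^ 2 * B ^ 3 * P ^ 5 + (-3) * t ^ 2 * B ^ 3 * P ^ 4 + (3) * t ^ 2 * B ^ 3 * P ^ 3 + (-1) * t ^ 2 * B ^ 3 * P ^ 2 + (2) * t ^ 2 * B ^ 2 * P ^ 6 * Q + (-7) * t ^ 2 * B ^ 2 * P ^ 5 * Q + t ^ 2 * B ^ 2 * P ^ 5 * q12 + t ^ 2 * B ^ 2 * P ^ 5 + (8) * t ^ 2 * B ^ 2 * P ^ 4 * Q + (-2) * t ^ 2 * B ^ 2 * P ^ 4 * q12 + (-1) * t ^ 2 * B ^ 2 * P ^ 4 + (-3) * t ^ 2 * B ^ 2 * P ^ 3 * Q + t ^ 2 * B ^ 2 * P ^ 3 * q12 + t ^ 2 * B * P ^ 7 * Q ^ 2 + (-5) * t ^ 2 * B * P ^ 6 * Q ^ 2 +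 (2) * t ^ 2 * B * P ^ 6 * Q * q12 + t ^ 2 * B * P ^ 6 * Q + (-1) * t ^ 2 * B * P ^ 6 * q12 + (7) * t ^ 2 * B * P ^ 5 * Q ^ 2 + (-4) * t ^ 2 * B * P ^ 5 * Q * q12 + (-1) * t ^ 2 * B * P ^ 5 * Q + t ^ 2 * B * P ^ 5 * q12 + t ^ 2 * B * P ^ 5 + (-3) * t ^ 2 * B * P ^ 4 * Q ^ 2 + (2) * t ^ 2 * B * P ^ 4 * Q * q12 + (-1) * t ^ 2 * B * P ^ 4 + (-1) * t ^ 2 * P ^ 7 * Q ^ 3 + t ^ 2 * P ^ 7 * Q ^ 2 * q12 + (2) * t ^ 2 * P ^ 6 * Q ^ 3 + (-2) * t ^ 2 * P ^ 6 * Q ^ 2 * q12 + t ^ 2 * P ^ 6 * Q + (-1) * t ^ 2 * P ^ 6 * q12 + (-1) * t ^ 2 * P ^ 5 * Q ^ 3 + t ^ 2 * P ^ 5 * Q ^ 2 * q12 + (-1) * t ^ 2 * P ^ 5 * Q + t ^ 2 * P ^ 5 * q12) * hc12q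
  have hsq : q12 ^ 2 * (P * (P - 1)) ^ 2 = ((P - 1) * (P * Q + B) + A * P) ^ 2 := by
    linear_combination (norm := ring1) (q12 * (P * (P - 1)) - ((P - 1) * (P * Q + B) + A * P)) * hc12q
  rw [div_eq_div_iff (mul_ne_zero ht (pow_ne_zero 2 hq12n)) (mul_ne_zero ht hE)]
  apply mul_left_cancel₀ (mul_ne_zero
    (pow_ne_zero 2 (mul_ne_zero ht (pow_ne_zero 2 hP)))
    (pow_ne_zero 2 (mul_ne_zero hP hPm1)))
  linear_combination (norm := ring1) (t * ((P - 1) * (P * Q + B) + A * P) * (P * (P - 1)) ^ 2) * hv1 + (t * ((P - 1) * (P * Q + B) + A * P)) * hv2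
    - ((t * A * P ^ 2 + t * B * P ^ 2 + (-1) * t * B * P + t * P ^ 3 * Q + (-1) * t * P ^ 2 * Q + t * P ^ 2 + (-1) * t * P + A ^ 2 * P ^ 2 * Q + (-1) * A ^ 2 * P + (2) * A * B * P ^ 2 * Q + (-2) * A * B * P * Q + (-2) * A * B * P + A * B + (2) * A * P ^ 3 * Q ^ 2 + (-2) * A * P ^ 2 * Q ^ 2 + (-1) * A * P ^ 2 * Q + A * P * Q + (-1) * A * P + B ^ 2 * P ^ 2 * Q + (-2) * B ^ 2 * P * Q + (-1) * B ^ 2 * P + B ^ 2 * Q + B ^ 2 + (2) * B * P ^ 3 * Q ^ 2 + (-4) * B * P ^ 2 * Q ^ 2 + (-1) * B * P ^ 2 * Q + (2) * B * P * Q ^ 2 + B * P * Q + (-1) * B * P + B + P ^ 4 * Q ^ 3 + (-2) * P ^ 3 * Q ^ 3 + P ^ 2 * Q ^ 3 + (-1) * P ^ 2 * Q + P * Q) * t * (t * P ^ 2) ^ 2) * hsq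

private lemma diff_a1 (t A B P Q u0 u1 : ℂ) (ht : t ≠ 0) (hA : A ≠ 0) (hP : P ≠ 0)
    (h0 : u0 = - t * ((t * P + A * P * Q + B * P * Q + (-1) * B * Q + P ^ 2 * Q ^ 2 + (-1) * P * Q ^ 2) / t - 1) / A)
    (h1 : u1 = - t * ((t * P ^ 2 + A * P ^ 2 * Q + (-1) * A * P + B * P ^ 2 * Q + (-1) * B * P * Q + (-1) * B * P + B + P ^ 3 * Q ^ 2 + (-1) * P ^ 2 * Q ^ 2 + (-1) * P ^ 2 * Q + P * Q) / (t * P) - 1) / A) :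
    u0 - u1 = -((P - 1) * (P * Q + B) + A * P) / (A * P) := by
  subst h0 h1
  field_simp
  ring

private lemma diff_a2 (t A B A' P Q u0 u1 : ℂ) (ht : t ≠ 0) (hA1 : A + 1 ≠ 0)
    (hPm1 : P - 1 ≠ 0) (hE : ((P - 1) * (P * Q + B) + A * P) ≠ 0) (hA' : A' = A + 1)
    (h0 : u0 = - t * ((t * P ^ 2 + (-1) * t * P + A * P ^ 2 * Q + (-1) * A * P * Q + (-1) * A * P + B * P ^ 2 * Q + (-2) * B * P * Q + (-1) * B * P + B * Q + B + P ^ 3 * Q ^ 2 + (-2) * P ^ 2 * Q ^ 2 + (-1) * P ^ 2 * Q + P * Q ^ 2 + P * Q) / (t * (P - 1)) - 1) / A')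
    (h1 : u1 = - t * ((t * A * P ^ 2 + t * B * P ^ 2 + (-1) * t * B * P + t * P ^ 3 * Q + (-1) * t * P ^ 2 * Q + t * P ^ 2 + (-1) * t * P + A ^ 2 * P ^ 2 * Q + (-1) * A ^ 2 * P + (2) * A * B * P ^ 2 * Q + (-2) * A * B * P * Q + (-2) * A * B * P + A * B + (2) * A * P ^ 3 * Q ^ 2 + (-2) * A * P ^ 2 * Q ^ 2 + (-1) * A * P ^ 2 * Q + A * P * Q + (-1) * A * P + B ^ 2 * P ^ 2 * Q + (-2) * B ^ 2 * P * Q + (-1) * B ^ 2 * P + B ^ 2 * Q + B ^ 2 + (2) * B * P ^ 3 * Q ^ 2 + (-4) * B * P ^ 2 * Q ^ 2 + (-1) * B * P ^ 2 * Q + (2) * B * P * Q ^ 2 + B * P * Q + (-1) * B * P + B + P ^ 4 * Q ^ 3 + (-2) * P ^ 3 * Q ^ 3 + P ^ 2 * Q ^ 3 + (-1) * P ^ 2 * Q + P * Q) / (t * ((P - 1) * (P * Q + B) + A * P)) - 1) / A') :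
    u0 - u1 = (t * P ^ 3 + (-2) * t * P ^ 2 + t * P + A ^ 2 * P + A * B * P + (-1) * A * B + A * P ^ 3 * Q + (-1) * A * P ^ 2 + (-1) * A * P * Q + A * P + B * P ^ 3 * Q + (-2) * B * P ^ 2 * Q + (-1) * B * P ^ 2 + B * P * Q + (2) * B * P + (-1) * B + P ^ 4 * Q ^ 2 + (-2) * P ^ 3 * Q ^ 2 + (-1) * P ^ 3 * Q + P ^ 2 * Q ^ 2 + (2) * P ^ 2 * Q + (-1) * P * Q) / ((A + 1) * (P - 1) * ((P - 1) * (P * Q + B) + A * P)) := by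
  subst hA' h0 h1
  generalize hEd : (P - 1) * (P * Q + B) + A * P = E at *
  field_simp
  subst hEd
  ring

private lemma diff_a3 (t A B A' P Q u0 u1 : ℂ) (ht : t ≠ 0) (hA : A ≠ 0)
    (hA1 : A + 1 ≠ 0) (hP : P ≠ 0) (hPm1 : P - 1 ≠ 0) (hA' : A' = A + 1)
    (h0 : u0 = - t * ((t * P ^ 2 + A * P ^ 2 * Q + (-1) * A * P + B * P ^ 2 * Q + (-1) * B * P * Q + (-1) * B * P + B + P ^ 3 * Q ^ 2 + (-1) * P ^ 2 * Q ^ 2 + (-1) * P ^ 2 * Q + P * Q) / (t * P) - 1) / A)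
    (h1 : u1 = - t * ((t * P ^ 2 + (-1) * t * P + A * P ^ 2 * Q + (-1) * A * P * Q + (-1) * A * P + B * P ^ 2 * Q + (-2) * B * P * Q + (-1) * B * P + B * Q + B + P ^ 3 * Q ^ 2 + (-2) * P ^ 2 * Q ^ 2 + (-1) * P ^ 2 * Q + P * Q ^ 2 + P * Q) / (t * (P - 1)) - 1) / A') :
    u0 - u1 = -((t * P ^ 3 + (-2) * t * P ^ 2 + t * P + A ^ 2 * P + A * B * P + (-1) * A * B + A * P ^ 3 * Q + (-1) * A * P ^ 2 + (-1) * A * P * Q + A * P + B * P ^ 3 * Q + (-2) * B * P ^ 2 * Q + (-1) * B * P ^ 2 + B * P * Q + (2) * B * P + (-1) * B + P ^ 4 * Q ^ 2 + (-2) * P ^ 3 * Q ^ 2 + (-1) * P ^ 3 * Q + P ^ 2 * Q ^ 2 + (2) * P ^ 2 * Q + (-1) * P * Q)) / (A * (A + 1) * P * (P - 1)) := by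
  subst hA' h0 h1
  field_simp
  ring

private lemma comb_a (t A B P Q : ℂ) (hA : A ≠ 0) (hA1 : A + 1 ≠ 0) (hP : P ≠ 0)
    (hPm1 : P - 1 ≠ 0) (hE : ((P - 1) * (P * Q + B) + A * P) ≠ 0) :
    (-((P - 1) * (P * Q + B) + A * P) / (A * P)) * ((t * P ^ 3 + (-2) * t * P ^ 2 + t * P + A ^ 2 * P + A * B * P + (-1) * A * B + A * P ^ 3 * Q + (-1) * A * P ^ 2 + (-1) * A * P * Q + A * P + B * P ^ 3 * Q + (-2) * B * P ^ 2 * Q + (-1) * B * P ^ 2 + B * P * Q + (2) * B * P + (-1) * B + P ^ 4 * Q ^ 2 + (-2) * P ^ 3 * Q ^ 2 + (-1) * P ^ 3 * Q + P ^ 2 * Q ^ 2 + (2) * P ^ 2 * Q + (-1) * P * Q) / ((A + 1) * (P - 1) * ((P - 1) * (P * Q + B) + A * P)))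
      = -((t * P ^ 3 + (-2) * t * P ^ 2 + t * P + A ^ 2 * P + A * B * P + (-1) * A * B + A * P ^ 3 * Q + (-1) * A * P ^ 2 + (-1) * A * P * Q + A * P + B * P ^ 3 * Q + (-2) * B * P ^ 2 * Q + (-1) * B * P ^ 2 + B * P * Q + (2) * B * P + (-1) * B + P ^ 4 * Q ^ 2 + (-2) * P ^ 3 * Q ^ 2 + (-1) * P ^ 3 * Q + P ^ 2 * Q ^ 2 + (2) * P ^ 2 * Q + (-1) * P * Q)) / (A * (A + 1) * P * (P - 1)) := by
  generalize hEd : (P - 1) * (P * Q + B) + A * P = E at *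
  field_simp

private lemma diff_b1 (t A B A' P Q u0 u1 : ℂ) (ht : t ≠ 0) (hB : B ≠ 0)
    (hPm1 : P - 1 ≠ 0) (hA' : A' = A + 1)
    (h0 : u0 = - t * ((t * P + A * P * Q + B * P * Q + (-1) * B * Q + P ^ 2 * Q ^ 2 + (-1) * P * Q ^ 2) / t) / B)
    (h1 : u1 = - t * ((t * P ^ 2 + (-1) * t * P + A * P ^ 2 * Q + (-1) * A * P * Q + (-1) * A * P + B * P ^ 2 * Q + (-2) * B * P * Q + (-1) * B * P + B * Q + B + P ^ 3 * Q ^ 2 + (-2) * P ^ 2 * Q ^ 2 + (-1) * P ^ 2 * Q + P * Q ^ 2 + P * Q) / (t * (P - 1))) / B) :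
    u0 - u1 = -((P - 1) * (P * Q + B) + A * P) / (B * (P - 1)) := by
  subst hA' h0 h1
  field_simp
  ring

private lemma diff_b2 (t A B B' P Q u0 u1 : ℂ) (ht : t ≠ 0) (hB1 : B + 1 ≠ 0)
    (hP : P ≠ 0) (hE : ((P - 1) * (P * Q + B) + A * P) ≠ 0) (hB' : B' = B + 1)
    (h0 : u0 = - t * ((t * P ^ 2 + A * P ^ 2 * Q + (-1) * A * P + B * P ^ 2 * Q + (-1) * B * P * Q + (-1) * B * P + B + P ^ 3 * Q ^ 2 + (-1) * P ^ 2 * Q ^ 2 + (-1) * P ^ 2 * Q + P * Q) / (t * P)) / B')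
    (h1 : u1 = - t * ((t * A * P ^ 2 + t * B * P ^ 2 + (-1) * t * B * P + t * P ^ 3 * Q + (-1) * t * P ^ 2 * Q + t * P ^ 2 + (-1) * t * P + A ^ 2 * P ^ 2 * Q + (-1) * A ^ 2 * P + (2) * A * B * P ^ 2 * Q + (-2) * A * B * P * Q + (-2) * A * B * P + A * B + (2) * A * P ^ 3 * Q ^ 2 + (-2) * A * P ^ 2 * Q ^ 2 + (-1) * A * P ^ 2 * Q + A * P * Q + (-1) * A * P + B ^ 2 * P ^ 2 * Q + (-2) * B ^ 2 * P * Q + (-1) * B ^ 2 * P + B ^ 2 * Q + B ^ 2 + (2) * B * P ^ 3 * Q ^ 2 + (-4) * B * P ^ 2 * Q ^ 2 + (-1) * B * P ^ 2 * Q + (2) * B * P * Q ^ 2 + B * P * Q + (-1) * B * P + B + P ^ 4 * Q ^ 3 + (-2) * P ^ 3 * Q ^ 3 + P ^ 2 * Q ^ 3 + (-1) * P ^ 2 * Q + P * Q) / (t * ((P - 1) * (P * Q + B) + A * P))) / B') :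
    u0 - u1 = (t * P ^ 3 + (-1) * t * P ^ 2 + (-1) * A * B * P + A * P ^ 3 * Q + (-1) * A * P ^ 2 * Q + (-1) * A * P ^ 2 + (-1) * B ^ 2 * P + B ^ 2 + B * P ^ 3 * Q + (-3) * B * P ^ 2 * Q + (-1) * B * P ^ 2 + (2) * B * P * Q + B * P + P ^ 4 * Q ^ 2 + (-2) * P ^ 3 * Q ^ 2 + (-1) * P ^ 3 * Q + P ^ 2 * Q ^ 2 + P ^ 2 * Q) / ((B + 1) * P * ((P - 1) * (P * Q + B) + A * P)) := by
  subst hB' h0 h1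
  generalize hEd : (P - 1) * (P * Q + B) + A * P = E at *
  field_simp
  subst hEd
  ring

private lemma diff_b3 (t A B B' P Q u0 u1 : ℂ) (ht : t ≠ 0) (hB : B ≠ 0)
    (hB1 : B + 1 ≠ 0) (hP : P ≠ 0) (hPm1 : P - 1 ≠ 0) (hB' : B' = B + 1)
    (h0 : u0 = - t * ((t * P ^ 2 + (-1) * t * P + A * P ^ 2 * Q + (-1) * A * P * Q + (-1) * A * P + B * P ^ 2 * Q + (-2) * B * P * Q + (-1) * B * P + B * Q + B + P ^ 3 * Q ^ 2 + (-2) * P ^ 2 * Q ^ 2 + (-1) * P ^ 2 * Q + P * Q ^ 2 + P * Q) / (t * (P - 1))) / B)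
    (h1 : u1 = - t * ((t * P ^ 2 + A * P ^ 2 * Q + (-1) * A * P + B * P ^ 2 * Q + (-1) * B * P * Q + (-1) * B * P + B + P ^ 3 * Q ^ 2 + (-1) * P ^ 2 * Q ^ 2 + (-1) * P ^ 2 * Q + P * Q) / (t * P)) / B') :
    u0 - u1 = -((t * P ^ 3 + (-1) * t * P ^ 2 + (-1) * A * B * P + A * P ^ 3 * Q + (-1) * A * P ^ 2 * Q + (-1) * A * P ^ 2 + (-1) * B ^ 2 * P + B ^ 2 + B * P ^ 3 * Q + (-3) * B * P ^ 2 * Q + (-1) * B * P ^ 2 + (2) * B * P * Q + B * P + P ^ 4 * Q ^ 2 + (-2) * P ^ 3 * Q ^ 2 + (-1) * P ^ 3 * Q + P ^ 2 * Q ^ 2 + P ^ 2 * Q)) / (B * (B + 1) * P * (P - 1)) := by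
  subst hB' h0 h1
  field_simp
  ring

private lemma comb_b (t A B P Q : ℂ) (hB : B ≠ 0) (hB1 : B + 1 ≠ 0) (hP : P ≠ 0)
    (hPm1 : P - 1 ≠ 0) (hE : ((P - 1) * (P * Q + B) + A * P) ≠ 0) :
    (-((P - 1) * (P * Q + B) + A * P) / (B * (P - 1))) * ((t * P ^ 3 + (-1) * t * P ^ 2 + (-1) * A * B * P + A * P ^ 3 * Q + (-1) * A * P ^ 2 * Q + (-1) * A * P ^ 2 + (-1) * B ^ 2 * P + B ^ 2 + B * P ^ 3 * Q + (-3) * B * P ^ 2 * Q + (-1) * B * P ^ 2 + (2) * B * P * Q + B * P + P ^ 4 * Q ^ 2 + (-2) * P ^ 3 * Q ^ 2 + (-1) * P ^ 3 * Q + P ^ 2 * Q ^ 2 + P ^ 2 * Q) / ((B + 1) * P * ((P - 1) * (P * Q + B) + A * P)))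
      = -((t * P ^ 3 + (-1) * t * P ^ 2 + (-1) * A * B * P + A * P ^ 3 * Q + (-1) * A * P ^ 2 * Q + (-1) * A * P ^ 2 + (-1) * B ^ 2 * P + B ^ 2 + B * P ^ 3 * Q + (-3) * B * P ^ 2 * Q + (-1) * B * P ^ 2 + (2) * B * P * Q + B * P + P ^ 4 * Q ^ 2 + (-2) * P ^ 3 * Q ^ 2 + (-1) * P ^ 3 * Q + P ^ 2 * Q ^ 2 + P ^ 2 * Q)) / (B * (B + 1) * P * (P - 1)) := by
  generalize hEd : (P - 1) * (P * Q + B) + A * P = E at *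
  field_simp

private lemma PIII_corners (t a1 a2 : ℂ) (ht : t ≠ 0)
    (p q : ℤ → ℤ → ℂ)
    (hq : ∀ k1 k2 : ℤ, q k1 k2 ≠ 0)
    (hden1 : ∀ k1 k2 : ℤ, (a1 + (k1 : ℂ)) + q k1 k2 * (p k1 k2 - 1) ≠ 0)
    (hden2 : ∀ k1 k2 : ℤ, p k1 k2 * q k1 k2 + (a2 + (k2 : ℂ)) ≠ 0)
    (hR1 : ∀ k1 k2 : ℤ, q (k1+1) k2 =
      t * (p k1 k2 - 1) / ((a1 + (k1 : ℂ)) + q k1 k2 * (p k1 k2 - 1)))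
    (hR3 : ∀ k1 k2 : ℤ, q k1 (k2+1) =
      - t * p k1 k2 / (p k1 k2 * q k1 k2 + (a2 + (k2 : ℂ))))
    (hR4 : ∀ k1 k2 : ℤ, p k1 (k2+1) =
      t * (p k1 k2 - 1) / (q k1 (k2+1)) ^ 2 - (a1 + (k1 : ℂ)) / q k1 (k2+1) + 1)
    (x y : ℤ) :
    p x y ≠ 0 ∧ p x y - 1 ≠ 0 ∧ ((p x y - 1) * (p x y * q x y + (a2 + (y : ℂ))) + (a1 + (x : ℂ)) * p x y) ≠ 0 ∧
    q x (y+1) * (p x y * q x y + (a2 + (y : ℂ))) = - t * p x y ∧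
    q (x+1) y * ((a1 + (x : ℂ)) + q x y * (p x y - 1)) = t * (p x y - 1) ∧
    p x (y+1) * (t * p x y ^ 2) = t * p x y ^ 2 + (p x y * q x y + (a2 + (y : ℂ))) * ((p x y - 1) * (p x y * q x y + (a2 + (y : ℂ))) + (a1 + (x : ℂ)) * p x y) ∧
    q (x+1) (y+1) * (p x y * (p x y - 1)) = -((p x y - 1) * (p x y * q x y + (a2 + (y : ℂ))) + (a1 + (x : ℂ)) * p x y) := by
  have hD1 := hden1 x y
  have hD2 := hden2 x y
  have hP : p x y ≠ 0 := fun h => hq x (y+1) (by rw [hR3 x y, h]; simp)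
  have hPm1 : p x y - 1 ≠ 0 := fun h => hq (x+1) y (by rw [hR1 x y, h]; simp)
  have r3c : q x (y+1) * (p x y * q x y + (a2 + (y : ℂ))) = - t * p x y := by
    rw [hR3 x y]; exact div_mul_cancel₀ _ hD2
  have r1c : q (x+1) y * ((a1 + (x : ℂ)) + q x y * (p x y - 1)) = t * (p x y - 1) := by
    rw [hR1 x y]; exact div_mul_cancel₀ _ hD1
  have cp2 : p x (y+1) = (t * p x y ^ 2 + (p x y * q x y + (a2 + (y : ℂ))) * ((p x y - 1) * (p x y * q x y + (a2 + (y : ℂ))) + (a1 + (x : ℂ)) * p x y)) /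
      (t * p x y ^ 2) := by
    rw [hR4 x y, hR3 x y]
    field_simp
    ring
  have c2p : p x (y+1) * (t * p x y ^ 2)
      = t * p x y ^ 2 + (p x y * q x y + (a2 + (y : ℂ))) * ((p x y - 1) * (p x y * q x y + (a2 + (y : ℂ))) + (a1 + (x : ℂ)) * p x y) := by
    rw [cp2]; exact div_mul_cancel₀ _ (mul_ne_zero ht (pow_ne_zero 2 hP))
  have hW : (a1 + (x : ℂ)) + q x (y+1) * (p x (y+1) - 1) =
      -((p x y - 1) * (p x y * q x y + (a2 + (y : ℂ)))) / p x y := by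
    rw [cp2, hR3 x y]
    field_simp
    ring
  have cq12 : q (x+1) (y+1) = -((p x y - 1) * (p x y * q x y + (a2 + (y : ℂ))) + (a1 + (x : ℂ)) * p x y) / (p x y * (p x y - 1)) := by
    rw [hR1 x (y+1), hW, cp2]
    field_simp
    ring
  have hE : ((p x y - 1) * (p x y * q x y + (a2 + (y : ℂ))) + (a1 + (x : ℂ)) * p x y) ≠ 0 := fun h => hq (x+1) (y+1) (by rw [cq12, h]; simp)
  have c12q : q (x+1) (y+1) * (p x y * (p x y - 1)) = -((p x y - 1) * (p x y * q x y + (a2 + (y : ℂ))) + (a1 + (x : ℂ)) * p x y) := by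
    rw [cq12]; exact div_mul_cancel₀ _ (mul_ne_zero hP hPm1)
  exact ⟨hP, hPm1, hE, r3c, r1c, c2p, c12q⟩

end PIIIAux

set_option maxHeartbeats 4000000 in
set_option maxRecDepth 100000 in
/-- Special solutions of the Hietarinta–Viallet (HV) equation from a P_III Bäcklund lattice. -/
theorem HV_solutions_from_PIII_lattice
    (t a1 a2 : ℂ) (ht : t ≠ 0)
    (p q : ℤ → ℤ → ℂ)
    (hq : ∀ k1 k2 : ℤ, q k1 k2 ≠ 0)
    (hden1 : ∀ k1 k2 : ℤ, (a1 + (k1 : ℂ)) + q k1 k2 * (p k1 k2 - 1) ≠ 0)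
    (hden2 : ∀ k1 k2 : ℤ, p k1 k2 * q k1 k2 + (a2 + (k2 : ℂ)) ≠ 0)
    (hR1 : ∀ k1 k2 : ℤ, q (k1+1) k2 =
      t * (p k1 k2 - 1) / ((a1 + (k1 : ℂ)) + q k1 k2 * (p k1 k2 - 1)))
    (hR2 : ∀ k1 k2 : ℤ, p (k1+1) k2 =
      - t * p k1 k2 / (q (k1+1) k2) ^ 2 - (a2 + (k2 : ℂ)) / q (k1+1) k2)
    (hR3 : ∀ k1 k2 : ℤ, q k1 (k2+1) =
      - t * p k1 k2 / (p k1 k2 * q k1 k2 + (a2 + (k2 : ℂ))))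
    (hR4 : ∀ k1 k2 : ℤ, p k1 (k2+1) =
      t * (p k1 k2 - 1) / (q k1 (k2+1)) ^ 2 - (a1 + (k1 : ℂ)) / q k1 (k2+1) + 1)
    :
    ((∀ l : ℤ, a1 + (l : ℂ) ≠ 0) →
      ∀ u : ℤ → ℤ → ℂ,
        (∀ l m : ℤ, u l m =
          - t * (HIII t (p l m) (q l m) (a1 + (l : ℂ)) (a2 + (m : ℂ)) - 1) / (a1 + (l : ℂ))) →
        ∀ l m : ℤ,
          (u l m - u l (m+1)) * (u (l+1) m - u (l+1) (m+1)) = u l (m+1) - u (l+1) m) ∧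
    ((∀ l : ℤ, a2 + (l : ℂ) ≠ 0) →
      ∀ u : ℤ → ℤ → ℂ,
        (∀ l m : ℤ, u l m =
          - t * HIII t (p m l) (q m l) (a1 + (m : ℂ)) (a2 + (l : ℂ)) / (a2 + (l : ℂ))) →
        ∀ l m : ℤ,
          (u l m - u l (m+1)) * (u (l+1) m - u (l+1) (m+1)) = u l (m+1) - u (l+1) m) := by
  constructor
  · intro ha u hu l m
    obtain ⟨hP, hPm1, hE, r3c, r1c, c2p, c12q⟩ :=
      PIII_corners t a1 a2 ht p q hq hden1 hden2 hR1 hR3 hR4 l m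
    have hD1 := hden1 l m
    have hD2 := hden2 l m
    have hprim := ha l
    have hprim1x : a1 + (l : ℂ) + 1 ≠ 0 := by
      have h := ha (l + 1)
      push_cast at h
      intro hc
      exact h (by linear_combination hc)
    have hcastA : (a1 + ((l : ℤ) + 1 : ℤ) : ℂ) = (a1 + (l : ℂ)) + 1 := by push_cast; ring
    have hcastB : (a2 + ((m : ℤ) + 1 : ℤ) : ℂ) = (a2 + (m : ℂ)) + 1 := by push_cast; ring
    have hH00 := Hval00 t (a1 + (l : ℂ)) (a2 + (m : ℂ)) (p l m) (q l m) ht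
    have hH01 := HA01 t (a1 + (l : ℂ)) (a2 + (m : ℂ)) (a2 + ((m : ℤ) + 1 : ℤ) : ℂ) (p l m) (q l m)
      (p l (m+1)) (q l (m+1)) ht hP hD2 (hq l (m+1)) hcastB r3c (hR4 l m)
    have hH10 := HA10 t (a1 + (l : ℂ)) (a2 + (m : ℂ)) (a1 + ((l : ℤ) + 1 : ℤ) : ℂ) (p l m) (q l m)
      (p (l+1) m) (q (l+1) m) ht hPm1 hD1 (hq (l+1) m) hcastA r1c (hR2 l m)
    have hH11 := HA11 t (a1 + (l : ℂ)) (a2 + (m : ℂ)) (a1 + ((l : ℤ) + 1 : ℤ) : ℂ) (a2 + ((m : ℤ) + 1 : ℤ) : ℂ)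
      (p l m) (q l m) (p l (m+1)) (p (l+1) (m+1)) (q (l+1) (m+1)) ht hP hPm1 hE
      (hq (l+1) (m+1)) hcastA hcastB c2p c12q (hR2 l (m+1))
    have h00 := hu l m; rw [hH00] at h00
    have h01 := hu l (m+1); rw [hH01] at h01
    have h10 := hu (l+1) m; rw [hH10] at h10
    have h11 := hu (l+1) (m+1); rw [hH11] at h11
    have e1 := diff_a1 t (a1 + (l : ℂ)) (a2 + (m : ℂ)) (p l m) (q l m) (u l m) (u l (m+1)) ht hprim hP h00 h01
    have e2 := diff_a2 t (a1 + (l : ℂ)) (a2 + (m : ℂ)) (a1 + ((l : ℤ) + 1 : ℤ) : ℂ) (p l m) (q l m)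
      (u (l+1) m) (u (l+1) (m+1)) ht hprim1x hPm1 hE hcastA h10 h11
    have e3 := diff_a3 t (a1 + (l : ℂ)) (a2 + (m : ℂ)) (a1 + ((l : ℤ) + 1 : ℤ) : ℂ) (p l m) (q l m)
      (u l (m+1)) (u (l+1) m) ht hprim hprim1x hP hPm1 hcastA h01 h10
    rw [e1, e2, e3]
    exact comb_a t (a1 + (l : ℂ)) (a2 + (m : ℂ)) (p l m) (q l m) hprim hprim1x hP hPm1 hE
  · intro ha u hu l m
    obtain ⟨hP, hPm1, hE, r3c, r1c, c2p, c12q⟩ :=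
      PIII_corners t a1 a2 ht p q hq hden1 hden2 hR1 hR3 hR4 m l
    have hD1 := hden1 m l
    have hD2 := hden2 m l
    have hprim := ha l
    have hprim1 : a2 + (l : ℂ) + 1 ≠ 0 := by
      have h := ha (l + 1)
      push_cast at h
      intro hc
      exact h (by linear_combination hc)
    have hcastA : (a1 + ((m : ℤ) + 1 : ℤ) : ℂ) = (a1 + (m : ℂ)) + 1 := by push_cast; ring
    have hcastB : (a2 + ((l : ℤ) + 1 : ℤ) : ℂ) = (a2 + (l : ℂ)) + 1 := by push_cast; ring
    have hH00 := Hval00 t (a1 + (m : ℂ)) (a2 + (l : ℂ)) (p m l) (q m l) ht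
    have hH01 := HA01 t (a1 + (m : ℂ)) (a2 + (l : ℂ)) (a2 + ((l : ℤ) + 1 : ℤ) : ℂ) (p m l) (q m l)
      (p m (l+1)) (q m (l+1)) ht hP hD2 (hq m (l+1)) hcastB r3c (hR4 m l)
    have hH10 := HA10 t (a1 + (m : ℂ)) (a2 + (l : ℂ)) (a1 + ((m : ℤ) + 1 : ℤ) : ℂ) (p m l) (q m l)
      (p (m+1) l) (q (m+1) l) ht hPm1 hD1 (hq (m+1) l) hcastA r1c (hR2 m l)
    have hH11 := HA11 t (a1 + (m : ℂ)) (a2 + (l : ℂ)) (a1 + ((m : ℤ) + 1 : ℤ) : ℂ) (a2 + ((l : ℤ) + 1 : ℤ) : ℂ)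
      (p m l) (q m l) (p m (l+1)) (p (m+1) (l+1)) (q (m+1) (l+1)) ht hP hPm1 hE
      (hq (m+1) (l+1)) hcastA hcastB c2p c12q (hR2 m (l+1))
    have h00 := hu l m; rw [hH00] at h00
    have h01 := hu l (m+1); rw [hH10] at h01
    have h10 := hu (l+1) m; rw [hH01] at h10
    have h11 := hu (l+1) (m+1); rw [hH11] at h11
    have e1 := diff_b1 t (a1 + (m : ℂ)) (a2 + (l : ℂ)) (a1 + ((m : ℤ) + 1 : ℤ) : ℂ) (p m l) (q m l)
      (u l m) (u l (m+1)) ht hprim hPm1 hcastA h00 h01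
    have e2 := diff_b2 t (a1 + (m : ℂ)) (a2 + (l : ℂ)) (a2 + ((l : ℤ) + 1 : ℤ) : ℂ) (p m l) (q m l)
      (u (l+1) m) (u (l+1) (m+1)) ht hprim1 hP hE hcastB h10 h11
    have e3 := diff_b3 t (a1 + (m : ℂ)) (a2 + (l : ℂ)) (a2 + ((l : ℤ) + 1 : ℤ) : ℂ) (p m l) (q m l)
      (u l (m+1)) (u (l+1) m) ht hprim hprim1 hP hPm1 hcastB h01 h10
    rw [e1, e2, e3]
    exact comb_b t (a1 + (m : ℂ)) (a2 + (l : ℂ)) (p m l) (q m l) hprim hprim1 hP hPm1 hE
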